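/- Let n ≥ 2 be an integer, d = n² + 3, and let D be the squarefree part of (d+1)(d−3). Then D is congruent to 1, 2, or 5 modulo 8, and moreover: D ≡ 1 (mod 8) if and only if n ≡ 0 (mod 8); D ≡ 2 (mod 8) if and only if n ≡ 2 (mod 4); and D ≡ 5 (mod 8) if and only if n is odd or n ≡ 4 (mod 8). -/
import Mathlib

lemma sq8 (g : ℕ) (h : g % 2 = 1) : g ^ 2 % 8 = 1 := by
  have h8 : g % 8 = 1 ∨ g % 8 = 3 ∨ g % 8 = 5 ∨ g % 8 = 7 := by omega
  rw [Nat.pow_mod]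
  rcases h8 with h | h | h | h <;> rw [h]

lemma core (f D a : ℕ) (ha : a % 2 = 1) (h : f ^ 2 * D = a) : D % 8 = a % 8 := by
  have hf : f % 2 = 1 := by
    rcases Nat.even_or_odd f with he | ho
    · obtain ⟨t, rfl⟩ := he
      obtain ⟨X, hX⟩ : ∃ X, a = 4 * X := ⟨t ^ 2 * D, by rw [← h]; ring⟩
      omega
    · exact Nat.odd_iff.mp ho
  have h8 : f ^ 2 % 8 = 1 := sq8 f hf
  calc D % 8 = (1 * (D % 8)) % 8 := by omega
    _ = (f ^ 2 % 8 * (D % 8)) % 8 := by rw [h8]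
    _ = (f ^ 2 * D) % 8 := (Nat.mul_mod _ _ _).symm
    _ = a % 8 := by rw [h]

lemma stepDown (f D C : ℕ) (hD : Squarefree D) (h : f ^ 2 * D = 4 * C) :
    ∃ g, g ^ 2 * D = C := by
  have hfe : f % 2 = 0 := by
    by_contra hf1
    have hf : f % 2 = 1 := by omega
    obtain ⟨m, hm⟩ : ∃ m, f = 2 * m + 1 := ⟨f / 2, by omega⟩
    obtain ⟨A, hA⟩ : ∃ A, 4 * A + D = 4 * C := ⟨(m ^ 2 + m) * D, by rw [← h, hm]; ring⟩
    have hdD : 4 ∣ D := by omega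
    obtain ⟨c, hc⟩ := hdD
    have : IsUnit 2 := hD 2 ⟨c, by omega⟩
    norm_num at this
  obtain ⟨g, rfl⟩ : ∃ g, f = 2 * g := ⟨f / 2, by omega⟩
  refine ⟨g, ?_⟩
  have h2 : 4 * (g ^ 2 * D) = 4 * C := by rw [← h]; ring
  exact Nat.eq_of_mul_eq_mul_left (by norm_num) h2

lemma evenCase : ∀ e f D b : ℕ, Squarefree D → b % 2 = 1 →
    f ^ 2 * D = 2 ^ (2 * e) * b → D % 8 = b % 8 := by
  intro e
  induction e with
  | zero =>
    intro f D b _ hb h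
    exact core f D b hb (by simpa using h)
  | succ e ih =>
    intro f D b hD hb h
    have h4 : f ^ 2 * D = 4 * (2 ^ (2 * e) * b) := by rw [h]; ring
    obtain ⟨g, hg⟩ := stepDown f D _ hD h4
    exact ih g D b hD hb hg

lemma oddCase : ∀ e f D b : ℕ, Squarefree D → b % 2 = 1 →
    f ^ 2 * D = 2 ^ (2 * e + 1) * b → D % 8 = 2 * (b % 4) := by
  intro e
  induction e with
  | zero =>
    intro f D b _ hb h
    have h1 : f ^ 2 * D = 2 * b := by simpa using h
    have hf : f % 2 = 1 := by
      rcases Nat.even_or_odd f with he | ho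
      · obtain ⟨t, rfl⟩ := he
        obtain ⟨X, hX⟩ : ∃ X, 4 * X = 2 * b := ⟨t ^ 2 * D, by rw [← h1]; ring⟩
        omega
      · exact Nat.odd_iff.mp ho
    have hD2 : D % 2 = 0 := by
      obtain ⟨m, hm⟩ : ∃ m, f = 2 * m + 1 := ⟨f / 2, by omega⟩
      obtain ⟨A, hA⟩ : ∃ A, 4 * A + D = 2 * b := ⟨(m ^ 2 + m) * D, by rw [← h1, hm]; ring⟩
      omega
    obtain ⟨u, rfl⟩ : ∃ u, D = 2 * u := ⟨D / 2, by omega⟩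
    have hu : f ^ 2 * u = b := by
      have h2 : 2 * (f ^ 2 * u) = 2 * b := by rw [← h1]; ring
      exact Nat.eq_of_mul_eq_mul_left (by norm_num) h2
    have := core f u b hb hu
    omega
  | succ e ih =>
    intro f D b hD hb h
    have h4 : f ^ 2 * D = 4 * (2 ^ (2 * e + 1) * b) := by rw [h]; ring
    obtain ⟨g, hg⟩ := stepDown f D _ hD h4
    exact ih g D b hD hb hg

/-- Let `n ≥ 2`, `d = n² + 3`, and let `D` be the squarefree part of `(d+1)(d−3)`.
Then `D ≡ 1, 2` or `5 (mod 8)`, and: `D ≡ 1 (mod 8)` iff `n ≡ 0 (mod 8)`;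
`D ≡ 2 (mod 8)` iff `n ≡ 2 (mod 4)`; `D ≡ 5 (mod 8)` iff `n` is odd or `n ≡ 4 (mod 8)`. -/
theorem stmt_5 (n d D f : ℕ) (hn : 2 ≤ n) (hd : d = n ^ 2 + 3)
    (hDsf : Squarefree D) (hf : 0 < f) (hfac : (d + 1) * (d - 3) = f ^ 2 * D) :
    (D % 8 = 1 ∨ D % 8 = 2 ∨ D % 8 = 5) ∧
    (D % 8 = 1 ↔ n % 8 = 0) ∧
    (D % 8 = 2 ↔ n % 4 = 2) ∧
    (D % 8 = 5 ↔ (n % 2 = 1 ∨ n % 8 = 4)) := by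
  subst hd
  have hfac' : f ^ 2 * D = (n ^ 2 + 4) * n ^ 2 := by
    have h2 : n ^ 2 + 3 - 3 = n ^ 2 := by omega
    rw [h2] at hfac
    exact hfac.symm
  clear hfac
  have key1 : n % 2 = 1 → D % 8 = 5 := by
    intro h1
    have hx : n ^ 2 % 8 = 1 := sq8 n h1
    have hb : ((n ^ 2 + 4) * n ^ 2) % 2 = 1 := by
      have e1 : (n ^ 2 + 4) % 2 = 1 := by omega
      have e2 : n ^ 2 % 2 = 1 := by omega
      rw [Nat.mul_mod, e1, e2]
    have hD8 := evenCase 0 f D ((n ^ 2 + 4) * n ^ 2) hDsf hb (by simpa using hfac')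
    have e5 : (n ^ 2 + 4) % 8 = 5 := by omega
    rw [Nat.mul_mod, e5, hx] at hD8
    omega
  have key2 : n % 4 = 2 → D % 8 = 2 := by
    intro h2
    obtain ⟨k, hk⟩ : ∃ k, n = 2 * k := ⟨n / 2, by omega⟩
    have hko : k % 2 = 1 := by omega
    have hx : k ^ 2 % 8 = 1 := sq8 k hko
    obtain ⟨v, hv⟩ : ∃ v, k ^ 2 + 1 = 2 * v := ⟨(k ^ 2 + 1) / 2, by omega⟩
    have hv4 : v % 4 = 1 := by omega
    have hb : (k ^ 2 * v) % 2 = 1 := by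
      have e1 : k ^ 2 % 2 = 1 := by omega
      have e2 : v % 2 = 1 := by omega
      rw [Nat.mul_mod, e1, e2]
    have heq : f ^ 2 * D = 2 ^ (2 * 2 + 1) * (k ^ 2 * v) := by
      rw [hfac', hk]
      have h16 : ((2 * k) ^ 2 + 4) * (2 * k) ^ 2 = 16 * (k ^ 2 * (k ^ 2 + 1)) := by ring
      rw [h16, hv]; ring
    have hD8 := oddCase 2 f D (k ^ 2 * v) hDsf hb heq
    have hb4 : (k ^ 2 * v) % 4 = 1 := by
      have e1 : k ^ 2 % 4 = 1 := by omega
      rw [Nat.mul_mod, e1, hv4]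
    omega
  have key34 : n % 4 = 0 → (n % 8 = 0 ∧ D % 8 = 1) ∨ (n % 8 = 4 ∧ D % 8 = 5) := by
    intro h4
    obtain ⟨k, hk⟩ : ∃ k, n = 4 * k := ⟨n / 4, by omega⟩
    have hk0 : k ≠ 0 := by omega
    obtain ⟨a, j, hj, hkj⟩ := Nat.exists_eq_pow_mul_and_not_dvd hk0 2 (by norm_num)
    have hjo : j % 2 = 1 := by omega
    have hj8 : j ^ 2 % 8 = 1 := sq8 j hjo
    have hb : (j ^ 2 * (4 * k ^ 2 + 1)) % 2 = 1 := by
      have e1 : j ^ 2 % 2 = 1 := by omega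
      have e2 : (4 * k ^ 2 + 1) % 2 = 1 := by omega
      rw [Nat.mul_mod, e1, e2]
    have heq : f ^ 2 * D = 2 ^ (2 * (3 + a)) * (j ^ 2 * (4 * k ^ 2 + 1)) := by
      rw [hfac', hk, hkj]; ring
    have hD8 := evenCase (3 + a) f D (j ^ 2 * (4 * k ^ 2 + 1)) hDsf hb heq
    rw [Nat.mul_mod, hj8] at hD8
    have hkp : k ^ 2 % 2 = k % 2 := by
      have hpm := Nat.pow_mod k 2 2
      rcases Nat.even_or_odd k with he | ho
      · have : k % 2 = 0 := Nat.even_iff.mp he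
        rw [hpm, this]
      · have : k % 2 = 1 := Nat.odd_iff.mp ho
        rw [hpm, this]
    omega
  omega
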